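/- Let φ: ℝ³ → ℝ⁴ be inverse stereographic projection, φ(x) = ( (|x|² − 1)/(|x|² + 1), 2x₁/(1 + |x|²), 2x₂/(1 + |x|²), 2x₃/(1 + |x|²) ). Then the Dirichlet energy of φ is finite and equals E₂(φ) = ½ ∫_{ℝ³} ‖Dφ(x)‖²_F dx = 6π². (Claim of Example 3 of the paper: inverse stereographic projection ℝ³ → S³ is conformal and has finite Dirichlet energy E₂ = 6π².) -/

import Mathlib

noncomputable section

open MeasureTheory

/-- The `i`-th partial derivative of a scalar function on `ℝ^m`. -/
def pd {m : ℕ} (i : Fin m) (f : (Fin m → ℝ) → ℝ) (x : Fin m → ℝ) : ℝ :=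
  fderiv ℝ f x (Pi.single i 1)

/-- Inverse stereographic projection `ℝ³ → S³ ⊂ ℝ⁴`. -/
def isp (x : Fin 3 → ℝ) : Fin 4 → ℝ :=
  ![((∑ i, x i ^ 2) - 1) / ((∑ i, x i ^ 2) + 1),
    2 * x 0 / (1 + ∑ i, x i ^ 2),
    2 * x 1 / (1 + ∑ i, x i ^ 2),
    2 * x 2 / (1 + ∑ i, x i ^ 2)]

def S3 (x : Fin 3 → ℝ) : ℝ := ∑ i, x i ^ 2

def S3' (x : Fin 3 → ℝ) : (Fin 3 → ℝ) →L[ℝ] ℝ :=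
  ∑ i : Fin 3, (2 * x i) • ContinuousLinearMap.proj i

lemma hasS (x : Fin 3 → ℝ) : HasFDerivAt S3 (S3' x) x := by
  have h : ∀ i : Fin 3, HasFDerivAt (fun y : Fin 3 → ℝ => y i ^ 2)
      ((2 * x i) • (ContinuousLinearMap.proj (R := ℝ) (φ := fun _ : Fin 3 => ℝ) i)) x := by
    intro i
    have hi : HasFDerivAt (fun y : Fin 3 → ℝ => y i)
        (ContinuousLinearMap.proj (R := ℝ) (φ := fun _ : Fin 3 => ℝ) i) x :=
      hasFDerivAt_apply i x
    have := hi.fun_mul hi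
    have heq : (fun y : Fin 3 → ℝ => y i ^ 2) = fun y => y i * y i := by
      funext y; ring
    rw [heq]
    exact this.congr_fderiv (by rw [two_mul, add_smul])
  have := HasFDerivAt.fun_sum (fun i (_ : i ∈ Finset.univ) => h i)
  exact this

lemma S3'_apply (x : Fin 3 → ℝ) (i : Fin 3) : S3' x (Pi.single i 1) = 2 * x i := by
  simp [S3', ContinuousLinearMap.sum_apply, Pi.single_apply]

lemma S3_nonneg (x : Fin 3 → ℝ) : 0 ≤ S3 x := Finset.sum_nonneg fun i _ => sq_nonneg _

lemma S3_pos (x : Fin 3 → ℝ) : (0:ℝ) < 1 + S3 x := by linarith [S3_nonneg x]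

lemma pd_eq {x : Fin 3 → ℝ} {f : (Fin 3 → ℝ) → ℝ} {L : (Fin 3 → ℝ) →L[ℝ] ℝ}
    (h : HasFDerivAt f L x) (i : Fin 3) : pd i f x = L (Pi.single i 1) := by
  rw [pd, h.fderiv]

lemma pd0 (x : Fin 3 → ℝ) (i : Fin 3) :
    pd i (fun y => (S3 y - 1) / (S3 y + 1)) x = 4 * x i / (1 + S3 x) ^ 2 := by
  have hne : S3 x + 1 ≠ 0 := by have := S3_pos x; intro h; linarith
  have hq : HasDerivAt (fun t : ℝ => (t - 1) / (t + 1))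
      ((1 * (S3 x + 1) - (S3 x - 1) * 1) / (S3 x + 1) ^ 2) (S3 x) :=
    ((hasDerivAt_id _).sub_const 1).div ((hasDerivAt_id _).add_const 1) hne
  have h : HasFDerivAt (fun y => (S3 y - 1) / (S3 y + 1))
      (((1 * (S3 x + 1) - (S3 x - 1) * 1) / (S3 x + 1) ^ 2) • S3' x) x :=
    hq.comp_hasFDerivAt x (hasS x)
  rw [pd_eq h i]
  have hv := S3'_apply x i
  simp only [ContinuousLinearMap.smul_apply, hv, smul_eq_mul]
  have := S3_pos x
  field_simp
  ring

lemma pdj (x : Fin 3 → ℝ) (j i : Fin 3) :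
    pd i (fun y => 2 * y j / (1 + S3 y)) x =
      (2 * (if j = i then (1:ℝ) else 0) * (1 + S3 x) - 4 * x j * x i) / (1 + S3 x) ^ 2 := by
  have hne : (1 : ℝ) + S3 x ≠ 0 := ne_of_gt (S3_pos x)
  have hc : HasFDerivAt (fun y : Fin 3 → ℝ => 2 * y j)
      ((2:ℝ) • (ContinuousLinearMap.proj (R := ℝ) (φ := fun _ : Fin 3 => ℝ) j)) x :=
    (hasFDerivAt_apply j x).const_mul 2
  have hq : HasDerivAt (fun t : ℝ => (1 + t)⁻¹) (-1 / (1 + S3 x) ^ 2) (S3 x) := by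
    have := ((hasDerivAt_id (S3 x)).const_add 1).fun_inv hne
    simpa using this
  have hd : HasFDerivAt (fun y => (1 + S3 y)⁻¹) ((-1 / (1 + S3 x) ^ 2) • S3' x) x :=
    hq.comp_hasFDerivAt x (hasS x)
  have hmul := hc.fun_mul hd
  have hfun : (fun y : Fin 3 → ℝ => 2 * y j / (1 + S3 y))
      = fun y => 2 * y j * (1 + S3 y)⁻¹ := by
    funext y; rw [div_eq_mul_inv]
  rw [hfun, pd_eq hmul i]
  have hv := S3'_apply x i
  simp only [ContinuousLinearMap.add_apply, ContinuousLinearMap.smul_apply, hv,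
    ContinuousLinearMap.proj_apply, smul_eq_mul, Pi.single_apply]
  have := S3_pos x
  rcases eq_or_ne j i with h | h <;> simp [h, eq_comm] <;> field_simp <;> ring

set_option maxHeartbeats 2000000 in
lemma key (x : Fin 3 → ℝ) :
    ∑ a : Fin 4, ∑ i : Fin 3, (pd i (fun y => isp y a) x) ^ 2 = 12 / (1 + S3 x) ^ 2 := by
  have e0 : (fun y => isp y 0) = fun y => (S3 y - 1) / (S3 y + 1) := by
    funext y; simp [isp, S3]
  have e1 : (fun y => isp y 1) = fun y => 2 * y 0 / (1 + S3 y) := by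
    funext y; simp [isp, S3]
  have e2 : (fun y => isp y 2) = fun y => 2 * y 1 / (1 + S3 y) := by
    funext y; simp [isp, S3]
  have e3 : (fun y => isp y 3) = fun y => 2 * y 2 / (1 + S3 y) := by
    funext y; simp [isp, S3]
  rw [Fin.sum_univ_four, e0, e1, e2, e3]
  simp only [Fin.sum_univ_three, pd0, pdj]
  norm_num [Fin.ext_iff]
  have hs : S3 x = x 0 ^ 2 + x 1 ^ 2 + x 2 ^ 2 := by simp [S3, Fin.sum_univ_three]
  have hp := S3_pos x
  rw [hs] at hp ⊢
  field_simp
  ring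

open Real in
lemma ioi_int : ∫ r in Set.Ioi (0:ℝ), r ^ 2 * (12 / (1 + r ^ 2) ^ 2) = 3 * π := by
  have hden : ∀ r : ℝ, (0:ℝ) < 1 + r ^ 2 := fun r => by positivity
  set F : ℝ → ℝ := fun r => 6 * arctan r - 6 * (r / (1 + r ^ 2)) with hF
  have hderiv : ∀ r ∈ Set.Ici (0:ℝ), HasDerivAt F (r ^ 2 * (12 / (1 + r ^ 2) ^ 2)) r := by
    intro r _
    have h1 : HasDerivAt arctan (1 / (1 + r ^ 2)) r := hasDerivAt_arctan r
    have h2 : HasDerivAt (fun t : ℝ => t / (1 + t ^ 2))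
        ((1 * (1 + r ^ 2) - r * (↑2 * r ^ 1)) / (1 + r ^ 2) ^ 2) r :=
      (hasDerivAt_id r).div ((hasDerivAt_pow 2 r).const_add 1) (ne_of_gt (hden r))
    have h3 := (h1.const_mul 6).sub (h2.const_mul 6)
    refine HasDerivAt.congr_deriv h3 ?_
    have := hden r
    field_simp
    ring
  have hint : MeasureTheory.IntegrableOn (fun r : ℝ => r ^ 2 * (12 / (1 + r ^ 2) ^ 2))
      (Set.Ioi 0) := by
    have hg : MeasureTheory.IntegrableOn (fun r : ℝ => 12 * (1 + r ^ 2)⁻¹) (Set.Ioi (0:ℝ)) :=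
      (integrable_inv_one_add_sq.const_mul 12).integrableOn
    apply hg.mono' ?_ ?_
    · apply Continuous.aestronglyMeasurable
      exact (continuous_pow 2).mul
        (continuous_const.div (by continuity) (fun r => by positivity))
    · filter_upwards with r
      have h := hden r
      rw [Real.norm_eq_abs, abs_of_nonneg (by positivity)]
      have e1 : r ^ 2 * (12 / (1 + r ^ 2) ^ 2) = 12 * r ^ 2 / (1 + r ^ 2) ^ 2 := by ring
      have e2 : 12 * (1 + r ^ 2)⁻¹ = 12 / (1 + r ^ 2) := by rw [mul_comm, div_eq_mul_inv, mul_comm]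
      rw [e1, e2, div_le_div_iff₀ (by positivity) (by positivity)]
      nlinarith [sq_nonneg r, sq_nonneg (r ^ 2)]
  have htend : Filter.Tendsto F Filter.atTop (nhds (3 * π)) := by
    have h1 : Filter.Tendsto (fun r : ℝ => 6 * arctan r) Filter.atTop (nhds (6 * (π / 2))) :=
      (tendsto_arctan_atTop.mono_right nhdsWithin_le_nhds).const_mul 6
    have h2 : Filter.Tendsto (fun r : ℝ => 6 * (r / (1 + r ^ 2))) Filter.atTop (nhds (6 * 0)) := by
      apply Filter.Tendsto.const_mul
      have hev : (fun r : ℝ => r / (1 + r ^ 2)) =ᶠ[Filter.atTop] fun r => (r⁻¹ + r)⁻¹ := by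
        filter_upwards [Filter.eventually_gt_atTop (0:ℝ)] with r hr
        rw [eq_comm, inv_eq_iff_eq_inv, eq_comm, inv_div]
        field_simp
      rw [Filter.tendsto_congr' hev]
      apply Filter.Tendsto.inv_tendsto_atTop
      apply Filter.tendsto_atTop_mono' Filter.atTop _ Filter.tendsto_id
      filter_upwards [Filter.eventually_gt_atTop (0:ℝ)] with r hr
      have : 0 ≤ r⁻¹ := by positivity
      simp only [id]
      linarith
    have h3 := h1.sub h2
    have he : 6 * (π / 2) - 6 * 0 = 3 * π := by ring
    rwa [he] at h3
  have hmain := integral_Ioi_of_hasDerivAt_of_tendsto' hderiv hint htend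
  rw [hmain]
  simp [hF, Real.arctan_zero]

open Real Module in
lemma radial_int :
    ∫ y : EuclideanSpace ℝ (Fin 3), 12 / (1 + ‖y‖ ^ 2) ^ 2 = 12 * π ^ 2 := by
  have h := integral_fun_norm_addHaar (volume : Measure (EuclideanSpace ℝ (Fin 3)))
    (fun r : ℝ => 12 / (1 + r ^ 2) ^ 2)
  have hdim : finrank ℝ (EuclideanSpace ℝ (Fin 3)) = 3 := by
    simp [finrank_euclideanSpace]
  rw [hdim] at h
  have hball : (volume (Metric.ball (0 : EuclideanSpace ℝ (Fin 3)) 1)).toReal = 4 / 3 * π := by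
    rw [EuclideanSpace.volume_ball]
    have hΓ : Real.Gamma ((Fintype.card (Fin 3) : ℝ) / 2 + 1) = 3 / 4 * Real.sqrt π := by
      have h32 : ((Fintype.card (Fin 3) : ℝ)) / 2 = 1 / 2 + 1 := by
        simp [Fintype.card_fin]; norm_num
      rw [h32, Real.Gamma_add_one (by norm_num), Real.Gamma_add_one (by norm_num),
        Real.Gamma_one_half_eq]
      ring
    rw [hΓ]
    have hsp : (0:ℝ) < Real.sqrt π := Real.sqrt_pos.mpr Real.pi_pos
    have hsq : Real.sqrt π ^ 2 = π := Real.sq_sqrt Real.pi_pos.le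
    rw [ENNReal.toReal_mul, ENNReal.toReal_pow, ENNReal.toReal_ofReal (by norm_num),
      ENNReal.toReal_ofReal (by positivity)]
    rw [Fintype.card_fin]
    rw [show Real.sqrt π ^ 3 = π * Real.sqrt π by nlinarith]
    field_simp
  rw [h, measureReal_def, hball]
  have : ∫ y in Set.Ioi (0:ℝ), y ^ (3 - 1) • (12 / (1 + y ^ 2) ^ 2)
      = ∫ y in Set.Ioi (0:ℝ), y ^ 2 * (12 / (1 + y ^ 2) ^ 2) := by norm_num
  rw [this, ioi_int]
  simp only [smul_eq_mul, nsmul_eq_mul]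
  push_cast
  ring

open Real in
lemma transfer :
    ∫ x : Fin 3 → ℝ, 12 / (1 + S3 x) ^ 2 = 12 * π ^ 2 := by
  rw [← (EuclideanSpace.volume_preserving_symm_measurableEquiv_toLp (Fin 3)).integral_comp
    (MeasurableEquiv.measurableEmbedding _) (fun x => 12 / (1 + S3 x) ^ 2)]
  rw [← radial_int]
  congr 1
  funext y
  congr 2
  have : S3 ((MeasurableEquiv.toLp 2 (Fin 3 → ℝ)).symm y) = ‖y‖ ^ 2 := by
    rw [EuclideanSpace.norm_eq, Real.sq_sqrt (Finset.sum_nonneg fun i _ => sq_nonneg _)]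
    simp [S3, sq_abs]
  rw [this]

lemma cont_main : Continuous fun x : Fin 3 → ℝ => 12 / (1 + S3 x) ^ 2 := by
  have hc : Continuous S3 := by
    apply continuous_finset_sum
    exact fun i _ => (continuous_apply i).pow 2
  apply continuous_const.div ((continuous_const.add hc).pow 2)
  intro x
  have := S3_pos x
  show (1 + S3 x) ^ 2 ≠ 0
  positivity

open Module in
lemma integrable_main :
    MeasureTheory.Integrable (fun x : Fin 3 → ℝ => 12 / (1 + S3 x) ^ 2) := by
  have hnr : (finrank ℝ (Fin 3 → ℝ) : ℝ) < 4 := by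
    simp [finrank_fintype_fun_eq_card]; norm_num
  have hg : MeasureTheory.Integrable (fun x : Fin 3 → ℝ => 48 * (1 + ‖x‖) ^ (-(4:ℝ))) :=
    (integrable_one_add_norm hnr).const_mul 48
  apply hg.mono' cont_main.aestronglyMeasurable
  filter_upwards with x
  have hs := S3_pos x
  have hnx : (0:ℝ) ≤ ‖x‖ := norm_nonneg x
  have hxs : ‖x‖ ^ 2 ≤ S3 x := by
    have h1 : ‖x‖ ≤ Real.sqrt (S3 x) := by
      rw [pi_norm_le_iff_of_nonneg (Real.sqrt_nonneg _)]
      intro i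
      apply Real.abs_le_sqrt
      exact Finset.single_le_sum (fun j _ => sq_nonneg (x j)) (Finset.mem_univ i)
    calc ‖x‖ ^ 2 ≤ Real.sqrt (S3 x) ^ 2 := by nlinarith [Real.sqrt_nonneg (S3 x)]
      _ = S3 x := Real.sq_sqrt (S3_nonneg x)
  rw [Real.norm_eq_abs, abs_of_nonneg (by positivity),
    Real.rpow_neg (by positivity), show (4:ℝ) = ((4:ℕ):ℝ) by norm_num, Real.rpow_natCast]
  rw [div_le_iff₀ (by positivity)]
  have h4 : (1 + ‖x‖) ^ 4 ≤ 4 * (1 + S3 x) ^ 2 := by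
    have h2 : (1 + ‖x‖) ^ 2 ≤ 2 * (1 + S3 x) := by nlinarith [sq_nonneg (1 - ‖x‖)]
    calc (1 + ‖x‖) ^ 4 = ((1 + ‖x‖) ^ 2) ^ 2 := by ring
      _ ≤ (2 * (1 + S3 x)) ^ 2 := by nlinarith [sq_nonneg (1 + ‖x‖)]
      _ = 4 * (1 + S3 x) ^ 2 := by ring
  have hinv : 1 / 4 ≤ ((1 + ‖x‖) ^ 4)⁻¹ * (1 + S3 x) ^ 2 := by
    rw [inv_mul_eq_div, le_div_iff₀ (by positivity)]
    nlinarith [h4]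
  nlinarith [hinv]

/-- Example 3: inverse stereographic projection has finite Dirichlet energy `E₂ = 6π²`. -/
theorem stmt18 :
    MeasureTheory.Integrable
      (fun x : Fin 3 → ℝ => ∑ a, ∑ i, (pd i (fun y => isp y a) x) ^ 2)
    ∧ (1 / 2 : ℝ) * (∫ x : Fin 3 → ℝ, ∑ a, ∑ i, (pd i (fun y => isp y a) x) ^ 2)
        = 6 * Real.pi ^ 2 := by
  have hfun : (fun x : Fin 3 → ℝ => ∑ a, ∑ i, (pd i (fun y => isp y a) x) ^ 2)
      = fun x => 12 / (1 + S3 x) ^ 2 := funext key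
  constructor
  · rw [hfun]; exact integrable_main
  · rw [show (∫ x : Fin 3 → ℝ, ∑ a, ∑ i, (pd i (fun y => isp y a) x) ^ 2)
        = ∫ x : Fin 3 → ℝ, 12 / (1 + S3 x) ^ 2 by rw [hfun], transfer]
    ring
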